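/- Let L be an N×N complex matrix and let C be the circle of center c ∈ ℂ and radius r > 0, positively oriented, whose open interior contains all eigenvalues of L. Then for every t ∈ ℝ: exp(−t·L) = (1/(2πi)) ∮_C e^{−tλ}·(λ·I − L)^{−1} dλ, where the integral is taken entrywise and (λ·I − L)^{−1} exists for every λ on C. -/

import Mathlib

open NormedSpace
open scoped ENNReal NNReal Pointwise Real



lemma cauchy_coeff_exp (t c : ℂ) {r : ℝ} (hr : 0 < r) (n : ℕ) :
    (∮ z in C(c, r), ((z - c)⁻¹ ^ n * ((z - c)⁻¹ * Complex.exp (-(t * z))))) =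
      (2 * Real.pi * Complex.I) * ((-t) ^ n / n.factorial * Complex.exp (-(t * c))) := by
  set g : ℂ → ℂ := fun z => Complex.exp (-(t * z)) with hgdef
  have hdiff : DifferentiableOn ℂ g (Metric.closedBall c r) := by
    apply Differentiable.differentiableOn
    exact (Complex.differentiable_exp.comp ((differentiable_id.const_mul t).neg))
  lift r to NNReal using hr.le with R hR
  have hR0 : 0 < R := by exact_mod_cast hr
  have H1 : HasFPowerSeriesOnBall g (cauchyPowerSeries g c R) c R :=
    hdiff.hasFPowerSeriesOnBall (by exact_mod_cast hR0)
  set q : FormalMultilinearSeries ℂ ℂ ℂ := fun n =>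
    ContinuousMultilinearMap.mkPiRing ℂ (Fin n) ((-t) ^ n / n.factorial * Complex.exp (-(t * c)))
    with hq
  have H2 : HasFPowerSeriesOnBall g q c R := by
    refine ⟨?_, by exact_mod_cast hR0, ?_⟩
    · apply FormalMultilinearSeries.le_radius_of_summable
      have hs : Summable fun n : ℕ => ‖Complex.exp (-(t * c))‖ *
          ((‖t‖ * R) ^ n / n.factorial) :=
        (Real.summable_pow_div_factorial _).mul_left _
      refine hs.of_nonneg_of_le (fun n => by positivity) fun n => ?_
      rw [hq]
      rw [ContinuousMultilinearMap.norm_mkPiRing]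
      have hnorm : ‖(-t) ^ n / n.factorial * Complex.exp (-(t * c))‖ * (R : ℝ) ^ n =
          ‖Complex.exp (-(t * c))‖ * ((‖t‖ * R) ^ n / n.factorial) := by
        simp only [norm_mul, norm_div, norm_pow, norm_neg,
          Complex.norm_natCast, mul_pow]
        ring
      rw [hnorm]
    · intro y hy
      simp only [hq, ContinuousMultilinearMap.mkPiRing_apply, Fin.prod_const, smul_eq_mul]
      have h1 : HasSum (fun n : ℕ => (-(t * y)) ^ n / n.factorial)
          (NormedSpace.exp (-(t * y))) := expSeries_div_hasSum_exp _
      rw [← Complex.exp_eq_exp_ℂ] at h1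
      have h2 := h1.mul_left (Complex.exp (-(t * c)))
      have : Complex.exp (-(t * c)) * Complex.exp (-(t * y)) = g (c + y) := by
        show _ = Complex.exp (-(t * (c + y)))
        rw [← Complex.exp_add]; ring_nf
      rw [this] at h2
      convert h2 using 2 with n
      · rfl
      rw [show (-(t * y)) = (-t) * y by ring, mul_pow]
      ring
  have heq : cauchyPowerSeries g c R = q :=
    H1.hasFPowerSeriesAt.eq_formalMultilinearSeries H2.hasFPowerSeriesAt
  have happ := congrArg (fun p => (p n) fun _ => (1 : ℂ)) heq
  have h2pi : (2 * (Real.pi : ℂ) * Complex.I) ≠ 0 := by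
    simp [Real.pi_ne_zero, Complex.I_ne_zero, Complex.ofReal_ne_zero]
  simp only [cauchyPowerSeries_apply, hq, ContinuousMultilinearMap.mkPiRing_apply,
    Fin.prod_const, one_pow, smul_eq_mul, mul_one, one_div] at happ
  field_simp at happ
  have hfun : (fun z => (z - c)⁻¹ ^ n * ((z - c)⁻¹ * Complex.exp (-(t * z)))) =
      fun z => (1 / (z - c)) ^ n * g z / (z - c) := by
    funext z
    simp only [hgdef, one_div]
    ring
  rw [hfun, happ, mul_comm c t]
  ring



lemma aux_main (N : ℕ) (L : Matrix (Fin N) (Fin N) ℂ)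
    (c : ℂ) (r : ℝ) (hr : 0 < r)
    (hspec : ∀ μ ∈ spectrum ℂ L, ‖μ - c‖ < r) :
    ∃ C : ℝ, 0 < C ∧ ∃ q : ℝ, 0 ≤ q ∧ q < r ∧
      (∀ (n : ℕ) (i j : Fin N),
        ‖((L - c • (1 : Matrix (Fin N) (Fin N) ℂ)) ^ n) i j‖ ≤ C * q ^ n) ∧
      (∀ z ∈ Metric.sphere c r, ∀ i j : Fin N,
        HasSum (fun n : ℕ => (z - c)⁻¹ ^ (n + 1) *
            (((L - c • (1 : Matrix (Fin N) (Fin N) ℂ)) ^ n) i j))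
          (((z • (1 : Matrix (Fin N) (Fin N) ℂ) - L)⁻¹) i j)) := by
  letI : SeminormedRing (Matrix (Fin N) (Fin N) ℂ) := Matrix.linftyOpSemiNormedRing
  letI : NormedRing (Matrix (Fin N) (Fin N) ℂ) := Matrix.linftyOpNormedRing
  letI : NormedAlgebra ℂ (Matrix (Fin N) (Fin N) ℂ) := Matrix.linftyOpNormedAlgebra
  have hentry_le : ∀ (B : Matrix (Fin N) (Fin N) ℂ) (i j : Fin N), ‖B i j‖ ≤ ‖B‖ := by
    intro B i j
    haveI : Nonempty (Fin N) := ⟨i⟩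
    rw [← coe_nnnorm, ← coe_nnnorm, NNReal.coe_le_coe]
    rw [Matrix.linfty_opNNNorm_def]
    calc ‖B i j‖₊ ≤ ∑ j', ‖B i j'‖₊ :=
          Finset.single_le_sum (f := fun j' => ‖B i j'‖₊) (fun k _ => zero_le) (Finset.mem_univ j)
      _ ≤ ⨆ i', ∑ j', ‖B i' j'‖₊ :=
          le_ciSup (f := fun i' => ∑ j', ‖B i' j'‖₊) (Set.Finite.bddAbove (Set.finite_range _)) i
      _ ≤ Finset.univ.sup fun i' => ∑ j', ‖B i' j'‖₊ := by
          apply ciSup_le fun i' => Finset.le_sup (Finset.mem_univ i')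
  set a : Matrix (Fin N) (Fin N) ℂ := L - c • 1 with ha
  -- spectral radius bound
  have hspec' : ∀ k ∈ spectrum ℂ a, ‖k‖₊ < Real.toNNReal r := by
    intro k hk
    have : k ∈ spectrum ℂ L - ({c} : Set ℂ) := by
      rw [spectrum.sub_singleton_eq, Algebra.algebraMap_eq_smul_one]
      exact hk
    obtain ⟨μ, hμ, e, he, hke⟩ := Set.mem_sub.mp this
    rw [Set.mem_singleton_iff] at he
    subst he
    subst hke
    have := hspec μ hμ
    rw [← NNReal.coe_lt_coe, coe_nnnorm, Real.coe_toNNReal r hr.le]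
    exact this
  have hρ : spectralRadius ℂ a < ENNReal.ofReal r := by
    rcases Set.eq_empty_or_nonempty (spectrum ℂ a) with hσ | hσ
    · have : spectralRadius ℂ a = 0 := by
        rw [spectralRadius]
        simp [hσ]
      rw [this]
      exact ENNReal.ofReal_pos.mpr hr
    · have h1 := spectrum.spectralRadius_lt_of_forall_lt_of_nonempty hσ hspec'
      simpa [ENNReal.ofReal] using h1
  -- Gelfand: get q and C with ∀ n, ‖a ^ n‖ ≤ C * q ^ n
  obtain ⟨C, hC, q, hq0, hqr, hbound⟩ :
      ∃ C : ℝ, 0 < C ∧ ∃ q : ℝ, 0 ≤ q ∧ q < r ∧ ∀ n : ℕ, ‖a ^ n‖ ≤ C * q ^ n := by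
    obtain ⟨Q, hρQ, hQr⟩ := ENNReal.lt_iff_exists_nnreal_btwn.mp hρ
    have hQpos : 0 < Q := by
      rcases (zero_le (a := Q)).eq_or_lt with h | h
      · exact absurd (h ▸ hρQ) (by simp)
      · exact h
    have hQr' : (Q : ℝ) < r := by
      rw [← ENNReal.ofReal_coe_nnreal, ENNReal.ofReal_lt_ofReal_iff hr] at hQr
      exact hQr
    have T := spectrum.pow_nnnorm_pow_one_div_tendsto_nhds_spectralRadius a
    obtain ⟨n₀, hn₀⟩ := Filter.eventually_atTop.mp (T.eventually_lt_const hρQ)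
    set n₁ : ℕ := max n₀ 1 with hn₁
    have key : ∀ n, n₁ ≤ n → ‖a ^ n‖ ≤ (Q : ℝ) ^ n := by
      intro n hn
      have hn0 : n ≠ 0 := by omega
      have h1 : (‖a ^ n‖₊ : ℝ≥0∞) ^ (1 / (n : ℝ)) < Q := hn₀ n (le_trans (le_max_left _ _) hn)
      have h2 : ((‖a ^ n‖₊ : ℝ≥0∞) ^ (1 / (n : ℝ))) ^ (n : ℝ) < (Q : ℝ≥0∞) ^ (n : ℝ) :=
        ENNReal.rpow_lt_rpow h1 (by positivity)
      rw [← ENNReal.rpow_mul, one_div, inv_mul_cancel₀ (by exact_mod_cast hn0 : (n : ℝ) ≠ 0),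
        ENNReal.rpow_one, ENNReal.rpow_natCast, ← ENNReal.coe_pow, ENNReal.coe_lt_coe] at h2
      calc ‖a ^ n‖ = ((‖a ^ n‖₊ : ℝ≥0) : ℝ) := (coe_nnnorm _).symm
        _ ≤ ((Q ^ n : ℝ≥0) : ℝ) := by exact_mod_cast h2.le
        _ = (Q : ℝ) ^ n := by push_cast; ring
    have hsum0 : 0 ≤ ∑ k ∈ Finset.range n₁, ‖a ^ k‖ / (Q : ℝ) ^ k :=
      Finset.sum_nonneg fun k _ => by positivity
    refine ⟨1 + ∑ k ∈ Finset.range n₁, ‖a ^ k‖ / (Q : ℝ) ^ k, by linarith,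
      Q, Q.coe_nonneg, hQr', fun n => ?_⟩
    rcases lt_or_ge n n₁ with h | h
    · have hterm : ‖a ^ n‖ / (Q : ℝ) ^ n ≤ 1 + ∑ k ∈ Finset.range n₁, ‖a ^ k‖ / (Q : ℝ) ^ k := by
        have hle : ‖a ^ n‖ / (Q : ℝ) ^ n ≤ ∑ k ∈ Finset.range n₁, ‖a ^ k‖ / (Q : ℝ) ^ k :=
          Finset.single_le_sum (f := fun k => ‖a ^ k‖ / (Q : ℝ) ^ k)
            (fun k _ => by positivity) (Finset.mem_range.mpr h)
        linarith
      have hQn : (0:ℝ) < (Q : ℝ) ^ n := by positivity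
      calc ‖a ^ n‖ = ‖a ^ n‖ / (Q : ℝ) ^ n * (Q : ℝ) ^ n := by field_simp
        _ ≤ (1 + ∑ k ∈ Finset.range n₁, ‖a ^ k‖ / (Q : ℝ) ^ k) * (Q : ℝ) ^ n :=
            mul_le_mul_of_nonneg_right hterm hQn.le
    · calc ‖a ^ n‖ ≤ (Q : ℝ) ^ n := key n h
        _ = 1 * (Q : ℝ) ^ n := (one_mul _).symm
        _ ≤ (1 + ∑ k ∈ Finset.range n₁, ‖a ^ k‖ / (Q : ℝ) ^ k) * (Q : ℝ) ^ n :=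
            mul_le_mul_of_nonneg_right (by linarith) (by positivity)
  refine ⟨C, hC, q, hq0, hqr, fun n i j => ?_, fun z hz i j => ?_⟩
  · exact le_trans (hentry_le _ i j) (hbound n)
  · -- Neumann series
    have hw : z - c ≠ 0 := by
      rw [sub_ne_zero]
      intro h
      rw [Metric.mem_sphere, h] at hz
      simp at hz
      exact hr.ne' hz.symm
    set y : ℂ := (z - c)⁻¹ with hy
    have hyabs : ‖y‖ = r⁻¹ := by
      rw [hy, norm_inv]
      rw [Metric.mem_sphere, dist_eq_norm] at hz
      rw [hz]
    set b : Matrix (Fin N) (Fin N) ℂ := y • a with hb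
    have hsum : Summable fun n : ℕ => b ^ n := by
      apply Summable.of_norm
      have : ∀ n : ℕ, ‖b ^ n‖ ≤ C * (q / r) ^ n := by
        intro n
        rw [hb, smul_pow, norm_smul, norm_pow, hyabs]
        calc r⁻¹ ^ n * ‖a ^ n‖ ≤ r⁻¹ ^ n * (C * q ^ n) :=
              mul_le_mul_of_nonneg_left (hbound n) (by positivity)
          _ = C * (q / r) ^ n := by rw [div_pow, inv_pow]; ring
      apply Summable.of_nonneg_of_le (fun n => norm_nonneg _) this
      apply Summable.mul_left
      apply summable_geometric_of_lt_one (by positivity)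
      rw [div_lt_one hr]; exact hqr
    set S : Matrix (Fin N) (Fin N) ℂ := ∑' n : ℕ, b ^ n with hS
    have hbS : HasSum (fun n : ℕ => b ^ n) S := hsum.hasSum
    have hshift : HasSum (fun n : ℕ => b ^ (n + 1)) (S - 1) := by
      rw [← hasSum_nat_add_iff' 1] at hbS
      simpa using hbS
    have hmulL : b * S = S - 1 := by
      have h1 : HasSum (fun n : ℕ => b * b ^ n) (b * S) := hbS.mul_left b
      have h2 : HasSum (fun n : ℕ => b * b ^ n) (S - 1) := by
        simpa [pow_succ'] using hshift
      exact h1.unique h2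
    have hmulR : S * b = S - 1 := by
      have h1 : HasSum (fun n : ℕ => b ^ n * b) (S * b) := hbS.mul_right b
      have h2 : HasSum (fun n : ℕ => b ^ n * b) (S - 1) := by
        simpa [pow_succ] using hshift
      exact h1.unique h2
    have hU : z • (1 : Matrix (Fin N) (Fin N) ℂ) - L = (z - c) • ((1 : Matrix _ _ ℂ) - b) := by
      rw [hb, hy, smul_sub, smul_smul, mul_inv_cancel₀ hw, one_smul, ha]
      rw [sub_smul]
      abel
    have hinv : (z • (1 : Matrix (Fin N) (Fin N) ℂ) - L)⁻¹ = y • S := by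
      apply Matrix.inv_eq_right_inv
      rw [hU, Matrix.smul_mul, Matrix.mul_smul, smul_smul, hy, mul_inv_cancel₀ hw, one_smul]
      rw [sub_mul, one_mul, hmulL]
      abel
    have hres : HasSum (fun n : ℕ => y ^ (n + 1) • a ^ n) (y • S) := by
      have := hbS.const_smul y
      convert this using 2 with n
      rw [hb, smul_pow, smul_smul, pow_succ]
      ring_nf
    rw [hinv]
    have hentry : HasSum (fun n : ℕ => y ^ (n + 1) * ((a ^ n) i j)) ((y • S) i j) := by
      simpa [Matrix.smul_apply, smul_eq_mul] using (Pi.hasSum.mp ((Pi.hasSum.mp hres) i)) j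
    exact hentry



lemma aux_exp (N : ℕ) (L : Matrix (Fin N) (Fin N) ℂ) (c t : ℂ) (i j : Fin N) :
    HasSum (fun n : ℕ => Complex.exp (-(t * c)) *
        ((n.factorial : ℂ)⁻¹ * (-t) ^ n * (((L - c • (1 : Matrix (Fin N) (Fin N) ℂ)) ^ n) i j)))
      ((NormedSpace.exp (-(t • L))) i j) := by
  set a : Matrix (Fin N) (Fin N) ℂ := L - c • 1 with ha
  have hsplit : -(t • L) = (-t) • a + algebraMap ℂ (Matrix (Fin N) (Fin N) ℂ) (-(t * c)) := by
    rw [Algebra.algebraMap_eq_smul_one, ha]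
    rw [smul_sub, smul_smul]
    ring_nf
    module
  have hcomm : Commute ((-t) • a) (algebraMap ℂ (Matrix (Fin N) (Fin N) ℂ) (-(t * c))) :=
    (Algebra.commutes _ _).symm
  have hmul : NormedSpace.exp (-(t • L)) =
      NormedSpace.exp ((-t) • a) * NormedSpace.exp (algebraMap ℂ _ (-(t * c))) := by
    rw [hsplit]
    exact Matrix.exp_add_of_commute _ _ hcomm
  have halg : NormedSpace.exp (algebraMap ℂ (Matrix (Fin N) (Fin N) ℂ) (-(t * c))) =
      algebraMap ℂ (Matrix (Fin N) (Fin N) ℂ) (Complex.exp (-(t * c))) := by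
    letI : SeminormedRing (Matrix (Fin N) (Fin N) ℂ) := Matrix.linftyOpSemiNormedRing
    letI : NormedRing (Matrix (Fin N) (Fin N) ℂ) := Matrix.linftyOpNormedRing
    letI : NormedAlgebra ℂ (Matrix (Fin N) (Fin N) ℂ) := Matrix.linftyOpNormedAlgebra
    rw [Complex.exp_eq_exp_ℂ]
    exact (algebraMap_exp_comm (-(t * c))).symm
  have hexpa : HasSum (fun n : ℕ => ((n.factorial : ℂ)⁻¹ * (-t) ^ n * ((a ^ n) i j)))
      ((NormedSpace.exp ((-t) • a)) i j) := by
    letI : SeminormedRing (Matrix (Fin N) (Fin N) ℂ) := Matrix.linftyOpSemiNormedRing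
    letI : NormedRing (Matrix (Fin N) (Fin N) ℂ) := Matrix.linftyOpNormedRing
    letI : NormedAlgebra ℂ (Matrix (Fin N) (Fin N) ℂ) := Matrix.linftyOpNormedAlgebra
    have h := NormedSpace.exp_series_hasSum_exp' (𝕂 := ℂ) ((-t) • a)
    have h2 := (Pi.hasSum.mp ((Pi.hasSum.mp h) i)) j
    convert h2 using 2 with n
    rw [smul_pow, Matrix.smul_apply, Matrix.smul_apply, smul_eq_mul, smul_eq_mul]
    ring
    all_goals rfl
  rw [hmul, halg]
  have hentry : (NormedSpace.exp ((-t) • a) *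
      algebraMap ℂ (Matrix (Fin N) (Fin N) ℂ) (Complex.exp (-(t * c)))) i j =
      Complex.exp (-(t * c)) * ((NormedSpace.exp ((-t) • a)) i j) := by
    rw [Algebra.algebraMap_eq_smul_one, Matrix.mul_smul, Matrix.mul_one, Matrix.smul_apply,
      smul_eq_mul]
  rw [hentry]
  exact hexpa.mul_left _

/-- Let `L` be an `N × N` complex matrix and `C` the positively oriented
circle of center `c` and radius `r > 0` whose open interior contains all eigenvalues of `L`.
Then `(λ I - L)⁻¹` exists for every `λ` on `C`, and for every `t ∈ ℝ` the matrix exponential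
satisfies, entrywise, `exp(-t L) = (1/(2πi)) ∮_C e^{-tλ} (λ I - L)⁻¹ dλ`. -/
theorem matrix_exp_eq_contour_integral_of_resolvent
    (N : ℕ) (L : Matrix (Fin N) (Fin N) ℂ)
    (c : ℂ) (r : ℝ) (hr : 0 < r)
    (hspec : ∀ μ ∈ spectrum ℂ L, ‖μ - c‖ < r) :
    (∀ z ∈ Metric.sphere c r, IsUnit (z • (1 : Matrix (Fin N) (Fin N) ℂ) - L)) ∧
    ∀ t : ℝ, ∀ i j : Fin N,
      (NormedSpace.exp (-((t : ℂ) • L))) i j =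
        (1 / (2 * Real.pi * Complex.I)) *
          ∮ z in C(c, r),
            Complex.exp (-(t * z)) * ((z • (1 : Matrix (Fin N) (Fin N) ℂ) - L)⁻¹ i j) := by
  constructor
  · intro z hz
    by_contra hu
    have hz' : z ∈ spectrum ℂ L := by
      rw [spectrum.mem_iff, Algebra.algebraMap_eq_smul_one]
      exact hu
    have h1 := hspec z hz'
    rw [Metric.mem_sphere, Complex.dist_eq] at hz
    rw [hz] at h1
    exact lt_irrefl r h1
  · intro t i j
    obtain ⟨C, hC, q, hq0, hqr, hbound, hres⟩ := aux_main N L c r hr hspec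
    set T : ℂ := (t : ℂ) with hT
    set a : Matrix (Fin N) (Fin N) ℂ := L - c • 1 with ha
    set φ : ℕ → ℂ := fun n => (a ^ n) i j with hφ
    set K : ℝ := Real.exp (‖T‖ * (‖c‖ + r)) with hK
    have hKb : ∀ θ : ℝ, ‖Complex.exp (-(T * circleMap c r θ))‖ ≤ K := by
      intro θ
      rw [Complex.norm_exp, hK]
      apply Real.exp_le_exp.2
      calc (-(T * circleMap c r θ)).re ≤ |(-(T * circleMap c r θ)).re| := le_abs_self _
        _ ≤ ‖-(T * circleMap c r θ)‖ := Complex.abs_re_le_norm _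
        _ = ‖T‖ * ‖circleMap c r θ‖ := by
            rw [norm_neg, norm_mul]
        _ ≤ ‖T‖ * (‖c‖ + r) := by
            apply mul_le_mul_of_nonneg_left _ (norm_nonneg _)
            calc ‖circleMap c r θ‖ = ‖c + circleMap 0 r θ‖ := by
                  rw [← circleMap_sub_center c r θ]; ring_nf
              _ ≤ ‖c‖ + ‖circleMap 0 r θ‖ := norm_add_le _ _
              _ = ‖c‖ + r := by rw [norm_circleMap_zero, abs_of_pos hr]
    set F : ℕ → ℝ → ℂ := fun n θ => (circleMap 0 r θ * Complex.I) *
      (Complex.exp (-(T * circleMap c r θ)) * ((circleMap 0 r θ)⁻¹ ^ (n + 1) * φ n)) with hF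
    set Ftot : ℝ → ℂ := fun θ => (circleMap 0 r θ * Complex.I) *
      (Complex.exp (-(T * circleMap c r θ)) *
        (((circleMap c r θ • (1 : Matrix (Fin N) (Fin N) ℂ) - L)⁻¹) i j)) with hFtot
    have hswap : HasSum (fun n : ℕ => ∫ θ in (0:ℝ)..2*π, F n θ) (∫ θ in (0:ℝ)..2*π, Ftot θ) := by
      apply intervalIntegral.hasSum_integral_of_dominated_convergence
        (bound := fun n _ => r * (K * (r⁻¹ ^ (n + 1) * (C * q ^ n))))
      · intro n
        apply Continuous.aestronglyMeasurable
        apply Continuous.mul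
        · exact (continuous_circleMap 0 r).mul continuous_const
        · apply Continuous.mul
          · exact Complex.continuous_exp.comp ((continuous_const.mul (continuous_circleMap c r)).neg)
          · exact ((((continuous_circleMap 0 r).inv₀
              (fun θ => by simpa using circleMap_ne_center (c := 0) hr.ne' (θ := θ))).pow (n+1)).mul continuous_const)
      · intro n
        apply Filter.Eventually.of_forall
        intro θ _
        rw [hF]
        simp only [norm_mul, Complex.norm_I, mul_one,
          norm_circleMap_zero, abs_of_pos hr, norm_pow, norm_inv]
        apply mul_le_mul_of_nonneg_left _ hr.le
        apply mul_le_mul (hKb θ) _ _ (le_trans (Real.exp_pos _).le (le_refl K))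
        · exact mul_le_mul_of_nonneg_left (hbound n i j) (by positivity)
        · positivity
      · apply Filter.Eventually.of_forall
        intro θ _
        have hgeo : Summable (fun n : ℕ => (r * K * C * r⁻¹) * (q / r) ^ n) := by
          apply Summable.mul_left
          apply summable_geometric_of_lt_one (by positivity)
          rw [div_lt_one hr]; exact hqr
        apply hgeo.congr
        intro n
        rw [div_pow, pow_succ, inv_pow]
        field_simp
      · exact intervalIntegrable_const
      · apply Filter.Eventually.of_forall
        intro θ _
        have h1 := hres (circleMap c r θ) (circleMap_mem_sphere c hr.le θ) i j
        rw [circleMap_sub_center] at h1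
        exact (h1.mul_left (Complex.exp (-(T * circleMap c r θ)))).mul_left
          (circleMap 0 r θ * Complex.I)
    -- identify per-term integrals
    have hterm : ∀ n : ℕ, (∫ θ in (0:ℝ)..2*π, F n θ) =
        (2 * Real.pi * Complex.I) * ((-T) ^ n / n.factorial * Complex.exp (-(T * c))) * φ n := by
      intro n
      have h2 : (∫ θ in (0:ℝ)..2*π, F n θ) =
          ∮ z in C(c, r), ((z - c)⁻¹ ^ n * ((z - c)⁻¹ * Complex.exp (-(T * z)))) • φ n := by
        rw [circleIntegral]
        apply intervalIntegral.integral_congr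
        intro θ _
        simp only [deriv_circleMap, circleMap_sub_center, hF, smul_eq_mul]
        rw [pow_succ]
        ring
      rw [h2, circleIntegral.integral_smul_const, cauchy_coeff_exp T c hr n, smul_eq_mul]
    -- other side
    have hexp := (aux_exp N L c T i j).mul_left (2 * Real.pi * Complex.I)
    have h3 : (fun n : ℕ => ∫ θ in (0:ℝ)..2*π, F n θ) =
        fun n : ℕ => (2 * Real.pi * Complex.I) * (Complex.exp (-(T * c)) *
          ((n.factorial : ℂ)⁻¹ * (-T) ^ n * φ n)) := by
      funext n
      rw [hterm n]
      field_simp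
    rw [h3] at hswap
    have hkey : (∫ θ in (0:ℝ)..2*π, Ftot θ) =
        (2 * Real.pi * Complex.I) * ((NormedSpace.exp (-(T • L))) i j) :=
      hswap.unique hexp
    have hint : (∮ z in C(c, r),
        Complex.exp (-(T * z)) * ((z • (1 : Matrix (Fin N) (Fin N) ℂ) - L)⁻¹ i j)) =
        ∫ θ in (0:ℝ)..2*π, Ftot θ := by
      rw [circleIntegral]
      apply intervalIntegral.integral_congr
      intro θ _
      simp only [deriv_circleMap, hFtot, smul_eq_mul]
    rw [hint, hkey]
    have h2pi : (2 * (Real.pi : ℂ) * Complex.I) ≠ 0 := by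
      simp [Real.pi_ne_zero, Complex.I_ne_zero, Complex.ofReal_ne_zero]
    field_simp
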